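/- Let γ_1, …, γ_m ∈ ℝ^n and let k_r⁺ > 0 and k_r⁻ ≥ 0 for r = 1,…,m. The following are equivalent: (A) all k_r⁻ > 0 and there exists x ∈ ℝ^n such that ∑_{i=1}^n γ_{r i} x_i = ln k_r⁺ − ln k_r⁻ for every r; (B) (1) k_r⁻ > 0 for all r (reversibility), and (2) for every λ ∈ ℝ^m with ∑_{r=1}^m λ_r γ_r = 0, the Wegscheider identity ∏_{r=1}^m (k_r⁺)^{λ_r} = ∏_{r=1}^m (k_r⁻)^{λ_r} holds (real powers). -/

import Mathlib

lemma solvable_iff_orth (n m : ℕ) (γ : Fin m → Fin n → ℝ) (b : Fin m → ℝ) :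
    (∃ x : Fin n → ℝ, ∀ r, ∑ i, γ r i * x i = b r) ↔
      (∀ lam : Fin m → ℝ, (∀ i, ∑ r, lam r * γ r i = 0) → ∑ r, lam r * b r = 0) := by
  constructor
  · rintro ⟨x, hx⟩ lam hlam
    have h1 : ∑ r, lam r * b r = ∑ r, lam r * ∑ i, γ r i * x i := by simp_rw [hx]
    rw [h1]
    simp_rw [Finset.mul_sum]
    rw [Finset.sum_comm]
    have h2 : ∀ i, ∑ r, lam r * (γ r i * x i) = (∑ r, lam r * γ r i) * x i := by
      intro i; rw [Finset.sum_mul]; exact Finset.sum_congr rfl fun r _ => by ring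
    simp_rw [h2, hlam, zero_mul, Finset.sum_const_zero]
  · intro h
    classical
    set col : Fin n → EuclideanSpace ℝ (Fin m) := fun i => WithLp.toLp 2 (fun r => γ r i) with hcol
    set W : Submodule ℝ (EuclideanSpace ℝ (Fin m)) := Submodule.span ℝ (Set.range col) with hW
    set bv : EuclideanSpace ℝ (Fin m) := WithLp.toLp 2 (fun r => b r) with hbv
    obtain ⟨y, hy, z, hz, hbyz⟩ := W.exists_add_mem_mem_orthogonal bv
    have hz' : ∀ i, ∑ r, z r * γ r i = 0 := by
      intro i
      have h3 := hz (col i) (Submodule.subset_span ⟨i, rfl⟩)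
      have h2 : ∑ r, γ r i * z r = 0 := by
        simpa [PiLp.inner_apply, RCLike.inner_apply, hcol, mul_comm] using h3
      rw [← h2]; exact Finset.sum_congr rfl fun r _ => by ring
    have hzb : ∑ r, z r * b r = 0 := h z hz'
    have hzy : ∑ r, z r * y r = 0 := by
      have h3 := hz y hy
      simpa [PiLp.inner_apply, RCLike.inner_apply, mul_comm] using h3
    have hzz : ∑ r, z r * z r = 0 := by
      have hb : ∀ r, b r = y r + z r := by
        intro r; have := congrArg (fun v : EuclideanSpace ℝ (Fin m) => v r) hbyz; simpa [hbv] using this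
      have : ∑ r, z r * b r = ∑ r, z r * y r + ∑ r, z r * z r := by
        simp_rw [hb, mul_add, Finset.sum_add_distrib]
      rw [hzb, hzy] at this; linarith
    have hz0 : z = 0 := by
      ext r
      have hnn : ∀ r ∈ Finset.univ, (0:ℝ) ≤ z r * z r := fun r _ => mul_self_nonneg _
      have := (Finset.sum_eq_zero_iff_of_nonneg hnn).mp hzz r (Finset.mem_univ r)
      exact mul_self_eq_zero.mp this
    have hbW : bv ∈ W := by
      rw [hbyz, hz0, add_zero]; exact hy
    rw [hW] at hbW
    obtain ⟨c, hc⟩ := (Submodule.mem_span_range_iff_exists_fun ℝ).mp hbW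
    refine ⟨c, fun r => ?_⟩
    have hc' : ∑ i, c i • (fun r => γ r i : Fin m → ℝ) = b := by
      have := congrArg WithLp.ofLp hc; simpa [hcol, hbv] using this
    have := congrFun hc' r
    have h4 : ∑ i, c i * γ r i = b r := by
      simpa [Finset.sum_apply, Pi.smul_apply, smul_eq_mul] using this
    rw [← h4]; exact Finset.sum_congr rfl fun i _ => by ring

/-- Classical criterion of detailed balance: existence of a positive
equilibrium (in logarithmic variables) is equivalent to reversibility plus
the Wegscheider identities for all vectors `λ` with `∑ λ_r γ_r = 0`. -/
theorem detailed_balance_iff_reversibility_and_wegscheider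
    (n m : ℕ) (γ : Fin m → Fin n → ℝ) (kp km : Fin m → ℝ)
    (hkp : ∀ r, 0 < kp r) (hkm : ∀ r, 0 ≤ km r) :
    ((∀ r, 0 < km r) ∧ ∃ x : Fin n → ℝ,
        ∀ r, ∑ i, γ r i * x i = Real.log (kp r) - Real.log (km r)) ↔
      ((∀ r, 0 < km r) ∧ ∀ lam : Fin m → ℝ,
        (∀ i, ∑ r, lam r * γ r i = 0) →
        ∏ r, kp r ^ lam r = ∏ r, km r ^ lam r) := by
  constructor
  · rintro ⟨hpos, x, hx⟩
    refine ⟨hpos, fun lam hlam => ?_⟩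
    have h0 := (solvable_iff_orth n m γ _).mp ⟨x, hx⟩ lam hlam
    -- h0 : ∑ r, lam r * (log kp r - log km r) = 0
    have hp : ∀ r, (0:ℝ) < kp r ^ lam r := fun r => Real.rpow_pos_of_pos (hkp r) _
    have hq : ∀ r, (0:ℝ) < km r ^ lam r := fun r => Real.rpow_pos_of_pos (hpos r) _
    have hlog : Real.log (∏ r, kp r ^ lam r) = Real.log (∏ r, km r ^ lam r) := by
      rw [Real.log_prod (fun r _ => (hp r).ne'),
          Real.log_prod (fun r _ => (hq r).ne')]
      simp_rw [Real.log_rpow (hkp _), Real.log_rpow (hpos _)]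
      have : ∑ r, lam r * Real.log (kp r) - ∑ r, lam r * Real.log (km r) = 0 := by
        rw [← Finset.sum_sub_distrib]
        simpa [mul_sub] using h0
      linarith
    exact Real.log_injOn_pos.eq_iff (Set.mem_Ioi.mpr (Finset.prod_pos fun r _ => hp r))
      (Set.mem_Ioi.mpr (Finset.prod_pos fun r _ => hq r)) |>.mp hlog
  · rintro ⟨hpos, hweg⟩
    refine ⟨hpos, (solvable_iff_orth n m γ _).mpr fun lam hlam => ?_⟩
    have h0 := hweg lam hlam
    have hp : ∀ r, (0:ℝ) < kp r ^ lam r := fun r => Real.rpow_pos_of_pos (hkp r) _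
    have hq : ∀ r, (0:ℝ) < km r ^ lam r := fun r => Real.rpow_pos_of_pos (hpos r) _
    have hlog := congrArg Real.log h0
    rw [Real.log_prod (fun r _ => (hp r).ne'),
        Real.log_prod (fun r _ => (hq r).ne')] at hlog
    simp_rw [Real.log_rpow (hkp _), Real.log_rpow (hpos _)] at hlog
    simp_rw [mul_sub, Finset.sum_sub_distrib]
    linarith
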